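/- Let S be a finite group, Z a subgroup of the center of S such that the quotient S/Z is commutative, and ι : Z → ℂˣ an injective group homomorphism. Let L be a maximal abelian subgroup of S, and let ρ : S → GL(V) be a finite-dimensional irreducible complex representation with ρ(z) = ι(z)·id for all z ∈ Z. Then there exists a group homomorphism χ : L → ℂˣ whose restriction to Z equals ι such that ρ is isomorphic to the induced representation Ind_L^S(χ) (the ℂ[S]-module ℂ[S] ⊗_{ℂ[L]} ℂ_χ). -/

import Mathlib

/-- A set of pairwise commuting elements generates a commutative subgroup. -/
lemma closure_comm {S : Type*} [Group S] (T : Set S)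
    (h : ∀ a ∈ T, ∀ b ∈ T, a * b = b * a) :
    ∀ x ∈ Subgroup.closure T, ∀ y ∈ Subgroup.closure T, x * y = y * x := by
  have step1 : Subgroup.closure T ≤ Subgroup.centralizer T := by
    rw [Subgroup.closure_le]
    intro a ha
    rw [SetLike.mem_coe, Subgroup.mem_centralizer_iff]
    intro b hb
    exact h b hb a ha
  intro x hx y hy
  have : Subgroup.closure T ≤ Subgroup.centralizer {x} := by
    rw [Subgroup.closure_le]
    intro a ha
    rw [SetLike.mem_coe, Subgroup.mem_centralizer_iff]
    intro b hb
    rw [Set.mem_singleton_iff] at hb; subst hb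
    exact (step1 hx a ha).symm
  have := this hy
  rw [Subgroup.mem_centralizer_iff] at this
  exact this x rfl

/-- Sum of a nontrivial character of a finite group vanishes. -/
lemma sum_char_eq_zero {G : Type*} [Group G] [Fintype G] (ψ : G →* ℂˣ)
    (g₀ : G) (h : ψ g₀ ≠ 1) : ∑ g : G, (ψ g : ℂ) = 0 := by
  have key : (ψ g₀ : ℂ) * ∑ g : G, (ψ g : ℂ) = ∑ g : G, (ψ g : ℂ) := by
    rw [Finset.mul_sum]
    refine Fintype.sum_bijective (fun g => g₀ * g) (Group.mulLeft_bijective g₀) _ _ ?_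
    intro g
    simp [map_mul]
  have h1 : ((ψ g₀ : ℂ) - 1) * ∑ g : G, (ψ g : ℂ) = 0 := by ring_nf; linear_combination key
  rcases mul_eq_zero.mp h1 with h2 | h2
  · exfalso; apply h; ext; simpa [sub_eq_zero] using h2
  · exact h2

/-- A commuting family of endomorphisms of a nonzero f.d. complex vector space,
preserving a nonzero subspace, has a common eigenvector in it. -/
lemma exists_common_eigenvector {V : Type*} [AddCommGroup V] [Module ℂ V]
    [FiniteDimensional ℂ V] {G : Type*}
    (f : G → (V →ₗ[ℂ] V)) (hfc : ∀ g h : G, f g * f h = f h * f g) :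
    ∀ (n : ℕ) (W : Submodule ℂ V), Module.finrank ℂ W ≤ n → W ≠ ⊥ →
      (∀ (g : G), ∀ w ∈ W, f g w ∈ W) →
      ∃ v ∈ W, v ≠ 0 ∧ ∀ g : G, ∃ c : ℂ, f g v = c • v := by
  intro n
  induction n with
  | zero =>
    intro W hrank hW _
    exact absurd (Submodule.finrank_eq_zero.mp (Nat.le_zero.mp hrank)) hW
  | succ n ih =>
    intro W hrank hW hinv
    by_cases hsc : ∀ g : G, ∃ c : ℂ, ∀ w ∈ W, f g w = c • w
    · obtain ⟨v, hv, hv0⟩ := Submodule.exists_mem_ne_zero_of_ne_bot hW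
      exact ⟨v, hv, hv0, fun g => (hsc g).imp fun c hc => hc v hv⟩
    · push_neg at hsc
      obtain ⟨g₀, hg₀⟩ := hsc
      haveI : Nontrivial W := Submodule.nontrivial_iff_ne_bot.mpr hW
      obtain ⟨c, hc⟩ := Module.End.exists_eigenvalue ((f g₀).restrict (hinv g₀))
      obtain ⟨u, hu⟩ := hc.exists_hasEigenvector
      set W' : Submodule ℂ V := W ⊓ Module.End.eigenspace (f g₀) c with hW'def
      have huW' : (u : V) ∈ W' := by
        refine Submodule.mem_inf.mpr ⟨u.2, Module.End.mem_eigenspace_iff.mpr ?_⟩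
        have := hu.apply_eq_smul
        have h2 : ((((f g₀).restrict (hinv g₀)) u : W) : V) = f g₀ (u : V) :=
          LinearMap.restrict_coe_apply _ _ _
        rw [this] at h2
        simpa using h2.symm
      have hW'ne : W' ≠ ⊥ := by
        intro hb
        have : (u : V) = 0 := by rw [hb] at huW'; simpa using huW'
        exact hu.2 (by ext; simp [this])
      have hlt : W' < W := by
        rcases hg₀ c with ⟨w, hwW, hw⟩
        refine lt_of_le_of_ne inf_le_left fun he => hw ?_
        have : w ∈ W' := he ▸ hwW
        exact Module.End.mem_eigenspace_iff.mp (Submodule.mem_inf.mp this).2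
      have hrank' : Module.finrank ℂ W' ≤ n :=
        Nat.lt_succ_iff.mp (lt_of_lt_of_le (Submodule.finrank_lt_finrank_of_lt hlt) hrank)
      have hinv' : ∀ (g : G), ∀ w ∈ W', f g w ∈ W' := by
        intro g w hw
        obtain ⟨hw1, hw2⟩ := Submodule.mem_inf.mp hw
        refine Submodule.mem_inf.mpr ⟨hinv g w hw1, Module.End.mem_eigenspace_iff.mpr ?_⟩
        have hw2' := Module.End.mem_eigenspace_iff.mp hw2
        have hcg : f g₀ (f g w) = f g (f g₀ w) := DFunLike.congr_fun (hfc g₀ g) w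
        rw [hcg, hw2', map_smul]
      obtain ⟨v, hv, hv0, hve⟩ := ih W' hrank' hW'ne hinv'
      exact ⟨v, (Submodule.mem_inf.mp hv).1, hv0, hve⟩

/-- The left ideal of `ℂ[S]` generated by the elements `l - χ(l)·1` for `l ∈ L`.
The quotient `ℂ[S] ⧸ indIdeal L χ` is the canonical model of the induced module
`ℂ[S] ⊗_{ℂ[L]} ℂ_χ`. -/
noncomputable def indIdeal {S : Type*} [Group S] (L : Subgroup S) (χ : L →* ℂˣ) :
    Submodule (MonoidAlgebra ℂ S) (MonoidAlgebra ℂ S) :=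
  Submodule.span (MonoidAlgebra ℂ S)
    {x : MonoidAlgebra ℂ S | ∃ l : L,
      x = MonoidAlgebra.of ℂ S (l : S) - (χ l : ℂ) • (1 : MonoidAlgebra ℂ S)}

set_option maxHeartbeats 3000000 in
/-- Let `S` be a finite group, `Z` a central subgroup with `S/Z`
commutative, `ι : Z → ℂˣ` injective, `L` a maximal abelian subgroup of `S`, and
`ρ : S → GL(V)` a finite-dimensional irreducible complex representation with
`ρ z = ι z • id` for `z ∈ Z`. Then there is a character `χ : L → ℂˣ` restricting to `ι`
on `Z` such that `ρ` is isomorphic to the induced representation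
`Ind_L^S χ = ℂ[S] ⊗_{ℂ[L]} ℂ_χ` (modelled as `ℂ[S] ⧸ indIdeal L χ`). -/
theorem stmt_13 (S : Type*) [Group S] [Finite S] (Z : Subgroup S)
    (hZ : Z ≤ Subgroup.center S)
    (hcomm : ∀ a b : S, a * b * a⁻¹ * b⁻¹ ∈ Z)
    (ι : Z →* ℂˣ) (hι : Function.Injective ι)
    (L : Subgroup S)
    (hLcomm : ∀ x ∈ L, ∀ y ∈ L, x * y = y * x)
    (hLmax : ∀ L' : Subgroup S, (∀ x ∈ L', ∀ y ∈ L', x * y = y * x) → L ≤ L' → L' = L)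
    (V : Type*) [AddCommGroup V] [Module ℂ V] [FiniteDimensional ℂ V] [Nontrivial V]
    (ρ : S →* (V →ₗ[ℂ] V)ˣ)
    (hirr : ∀ W : Submodule ℂ V,
      (∀ (s : S) (v : V), v ∈ W → (ρ s : V →ₗ[ℂ] V) v ∈ W) → W = ⊥ ∨ W = ⊤)
    (hρ : ∀ z : Z, ((ρ (z : S) : (V →ₗ[ℂ] V)ˣ) : V →ₗ[ℂ] V) =
      (ι z : ℂ) • (1 : V →ₗ[ℂ] V)) :
    ∃ χ : L →* ℂˣ,
      (∀ (z : S) (hz : z ∈ Z) (hz' : z ∈ L), χ ⟨z, hz'⟩ = ι ⟨z, hz⟩) ∧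
      ∃ T : (MonoidAlgebra ℂ S ⧸ indIdeal L χ) ≃+ V,
        (∀ (a : ℂ) (x : MonoidAlgebra ℂ S ⧸ indIdeal L χ),
          T ((algebraMap ℂ (MonoidAlgebra ℂ S) a) • x) = a • T x) ∧
        (∀ (s : S) (x : MonoidAlgebra ℂ S ⧸ indIdeal L χ),
          T ((MonoidAlgebra.of ℂ S s) • x) = (ρ s : V →ₗ[ℂ] V) (T x)) := by
  classical
  -- Z is contained in L
  have hZL : Z ≤ L := by
    have hcl := closure_comm ((L : Set S) ∪ (Z : Set S)) (by
      rintro a (ha | ha) b (hb | hb)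
      · exact hLcomm a ha b hb
      · exact Subgroup.mem_center_iff.mp (hZ hb) a
      · exact (Subgroup.mem_center_iff.mp (hZ ha) b).symm
      · exact (Subgroup.mem_center_iff.mp (hZ ha) b).symm)
    have hLle : L ≤ Subgroup.closure ((L : Set S) ∪ (Z : Set S)) :=
      fun x hx => Subgroup.subset_closure (Or.inl hx)
    have heq := hLmax _ hcl hLle
    intro z hz
    rw [← heq]
    exact Subgroup.subset_closure (Or.inr hz)
  -- common eigenvector for L
  set f : L → (V →ₗ[ℂ] V) := fun l => ((ρ (l : S) : (V →ₗ[ℂ] V)ˣ) : V →ₗ[ℂ] V) with hf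
  have hfc : ∀ g h : L, f g * f h = f h * f g := by
    intro g h
    have : ((g : S) * h) = (h : S) * g := hLcomm g g.2 h h.2
    simp only [hf]
    rw [← Units.val_mul, ← Units.val_mul, ← map_mul, ← map_mul, this]
  obtain ⟨v, -, hv0, hve⟩ := exists_common_eigenvector f hfc (Module.finrank ℂ V) ⊤
    (by rw [finrank_top]) top_ne_bot (fun g w _ => Submodule.mem_top)
  choose c hc using hve
  have hc0 : ∀ l : L, c l ≠ 0 := by
    intro l hcl
    apply hv0
    have h1 : f l v = 0 := by rw [hc l, hcl, zero_smul]
    have h2 : f l⁻¹ (f l v) = v := by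
      simp only [hf, ← Module.End.mul_apply, ← Units.val_mul, ← map_mul]
      simp
    rw [h1, map_zero] at h2
    exact h2.symm
  set χ : L →* ℂˣ := MonoidHom.mk' (fun l => Units.mk0 (c l) (hc0 l)) (by
    intro l₁ l₂
    ext
    show c (l₁ * l₂) = c l₁ * c l₂
    have h1 : f (l₁ * l₂) v = (c l₁ * c l₂) • v := by
      have : f (l₁ * l₂) = f l₁ * f l₂ := by
        simp only [hf]; rw [← Units.val_mul, ← map_mul]; rfl
      rw [this, Module.End.mul_apply, hc l₂, map_smul, hc l₁, smul_smul, mul_comm]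
    rw [hc (l₁ * l₂)] at h1
    exact smul_left_injective ℂ hv0 h1) with hχdef
  have hχ : ∀ l : L, ((ρ (l : S) : (V →ₗ[ℂ] V)ˣ) : V →ₗ[ℂ] V) v = (χ l : ℂ) • v :=
    fun l => hc l
  -- χ extends ι
  have hext : ∀ (z : S) (hz : z ∈ Z) (hz' : z ∈ L), χ ⟨z, hz'⟩ = ι ⟨z, hz⟩ := by
    intro z hz hz'
    ext
    have h1 : ((χ ⟨z, hz'⟩ : ℂˣ) : ℂ) • v = ((ι ⟨z, hz⟩ : ℂˣ) : ℂ) • v := by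
      rw [← hχ ⟨z, hz'⟩]
      show ((ρ ((⟨z, hz⟩ : Z) : S) : (V →ₗ[ℂ] V)ˣ) : V →ₗ[ℂ] V) v = _
      rw [hρ ⟨z, hz⟩]
      simp
    exact smul_left_injective ℂ hv0 h1
  -- conjugation stays in L
  have hconj : ∀ (s m : S), m ∈ L → s * m * s⁻¹ ∈ L := by
    intro s m hm
    have h1 : s * m * s⁻¹ * m⁻¹ ∈ Z := hcomm s m
    have : s * m * s⁻¹ = (s * m * s⁻¹ * m⁻¹) * m := by group
    rw [this]
    exact L.mul_mem (hZL h1) hm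
  have hconj' : ∀ (s m : S), m ∈ L → s⁻¹ * m * s ∈ L := by
    intro s m hm
    have := hconj s⁻¹ m hm
    rwa [inv_inv] at this
  -- nondegeneracy
  have hnd : ∀ u : S,
      (∀ (m : S) (hm : m ∈ L), χ ⟨u * m * u⁻¹, hconj u m hm⟩ = χ ⟨m, hm⟩) → u ∈ L := by
    intro u hu
    have hcommu : ∀ m ∈ L, u * m = m * u := by
      intro m hm
      have hcZ : u * m * u⁻¹ * m⁻¹ ∈ Z := hcomm u m
      have hsub : (⟨u * m * u⁻¹, hconj u m hm⟩ : L)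
          = ⟨u * m * u⁻¹ * m⁻¹, hZL hcZ⟩ * ⟨m, hm⟩ := by
        ext; show u * m * u⁻¹ = (u * m * u⁻¹ * m⁻¹) * m; group
      have h1 : χ ⟨u * m * u⁻¹ * m⁻¹, hZL hcZ⟩ * χ ⟨m, hm⟩ = χ ⟨m, hm⟩ := by
        rw [← map_mul, ← hsub, hu m hm]
      have h2 : χ ⟨u * m * u⁻¹ * m⁻¹, hZL hcZ⟩ = 1 :=
        mul_right_cancel (a := χ ⟨u * m * u⁻¹ * m⁻¹, hZL hcZ⟩) (b := χ ⟨m, hm⟩) (c := 1)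
          (by rw [h1, one_mul])
      rw [hext _ hcZ _] at h2
      have h3 : (⟨u * m * u⁻¹ * m⁻¹, hcZ⟩ : Z) = 1 := hι (by rw [h2, map_one])
      have h4 : u * m * u⁻¹ * m⁻¹ = 1 := congrArg Subtype.val h3
      have h5 : u * m = (u * m * u⁻¹ * m⁻¹) * (m * u) := by group
      rw [h4, one_mul] at h5
      exact h5
    -- closure of L and u is commutative
    have hcl := closure_comm ((L : Set S) ∪ {u}) (by
      rintro a (ha | ha) b (hb | hb)
      · exact hLcomm a ha b hb
      · rw [Set.mem_singleton_iff] at hb; subst hb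
        exact (hcommu a ha).symm
      · rw [Set.mem_singleton_iff] at ha; subst ha
        exact hcommu b hb
      · rw [Set.mem_singleton_iff] at ha hb; subst ha; subst hb; rfl)
    have hLle : L ≤ Subgroup.closure ((L : Set S) ∪ {u}) :=
      fun x hx => Subgroup.subset_closure (Or.inl hx)
    have heq := hLmax _ hcl hLle
    rw [← heq]
    exact Subgroup.subset_closure (Or.inr rfl)
  -- quotient S/L and conjugated characters
  letI : Fintype (S ⧸ L) := Fintype.ofFinite _
  letI : Fintype L := Fintype.ofFinite _
  set cchi : S → (L →* ℂˣ) := fun s => MonoidHom.mk'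
    (fun l => χ ⟨s⁻¹ * (l : S) * s, hconj' s l l.2⟩) (by
      intro l₁ l₂
      have e : (⟨s⁻¹ * ((l₁ * l₂ : L) : S) * s, hconj' s _ (l₁ * l₂).2⟩ : L)
          = ⟨s⁻¹ * (l₁ : S) * s, hconj' s _ l₁.2⟩ * ⟨s⁻¹ * (l₂ : S) * s, hconj' s _ l₂.2⟩ := by
        ext
        show s⁻¹ * ((l₁ : S) * l₂) * s = (s⁻¹ * (l₁ : S) * s) * (s⁻¹ * (l₂ : S) * s)
        group
      exact (congrArg χ e).trans (map_mul χ _ _)) with hcchidef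
  -- distinctness of conjugated characters on distinct cosets
  have hdist : ∀ p q : S ⧸ L, cchi (Quotient.out p) = cchi (Quotient.out q) → p = q := by
    intro p q hpq
    set s := Quotient.out p
    set t := Quotient.out q
    have key : ∀ (m : S) (hm : m ∈ L),
        χ ⟨(s⁻¹ * t) * m * (s⁻¹ * t)⁻¹, hconj (s⁻¹ * t) m hm⟩ = χ ⟨m, hm⟩ := by
      intro m hm
      have hl : t * m * t⁻¹ ∈ L := hconj t m hm
      have h1 := DFunLike.congr_fun hpq ⟨t * m * t⁻¹, hl⟩
      have e1 : (⟨s⁻¹ * (t * m * t⁻¹) * s, hconj' s _ hl⟩ : L)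
          = ⟨(s⁻¹ * t) * m * (s⁻¹ * t)⁻¹, hconj (s⁻¹ * t) m hm⟩ := by
        ext; show s⁻¹ * (t * m * t⁻¹) * s = (s⁻¹ * t) * m * (s⁻¹ * t)⁻¹; group
      have e2 : (⟨t⁻¹ * (t * m * t⁻¹) * t, hconj' t _ hl⟩ : L) = ⟨m, hm⟩ := by
        ext; show t⁻¹ * (t * m * t⁻¹) * t = m; group
      calc χ ⟨(s⁻¹ * t) * m * (s⁻¹ * t)⁻¹, hconj (s⁻¹ * t) m hm⟩
          = χ ⟨s⁻¹ * (t * m * t⁻¹) * s, hconj' s _ hl⟩ := by rw [e1]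
        _ = χ ⟨t⁻¹ * (t * m * t⁻¹) * t, hconj' t _ hl⟩ := h1
        _ = χ ⟨m, hm⟩ := by rw [e2]
    have huL : s⁻¹ * t ∈ L := hnd _ key
    have : (s : S ⧸ L) = (t : S ⧸ L) := QuotientGroup.eq.mpr huL
    rwa [QuotientGroup.out_eq', QuotientGroup.out_eq'] at this
  -- weight vectors
  set w : (S ⧸ L) → V := fun q => ((ρ (Quotient.out q) : (V →ₗ[ℂ] V)ˣ) : V →ₗ[ℂ] V) v with hwdef
  have hρinj : ∀ (s : S) (x : V), ((ρ s : (V →ₗ[ℂ] V)ˣ) : V →ₗ[ℂ] V) x = 0 → x = 0 := by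
    intro s x hx
    have : ((ρ s⁻¹ : (V →ₗ[ℂ] V)ˣ) : V →ₗ[ℂ] V) (((ρ s : (V →ₗ[ℂ] V)ˣ) : V →ₗ[ℂ] V) x) = x := by
      rw [← Module.End.mul_apply, ← Units.val_mul, ← map_mul]
      simp
    rw [hx, map_zero] at this
    exact this.symm
  have hw0 : ∀ q : S ⧸ L, w q ≠ 0 := fun q hq => hv0 (hρinj _ v hq)
  have hweight : ∀ (q : S ⧸ L) (l : L),
      ((ρ (l : S) : (V →ₗ[ℂ] V)ˣ) : V →ₗ[ℂ] V) (w q) = ((cchi (Quotient.out q) l : ℂˣ) : ℂ) • w q := by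
    intro q l
    set t := Quotient.out q
    have h1 : (l : S) * t = t * (t⁻¹ * l * t) := by group
    show ((ρ (l : S) : (V →ₗ[ℂ] V)ˣ) : V →ₗ[ℂ] V)
      (((ρ t : (V →ₗ[ℂ] V)ˣ) : V →ₗ[ℂ] V) v) = _
    rw [← Module.End.mul_apply, ← Units.val_mul, ← map_mul, h1, map_mul, Units.val_mul,
      Module.End.mul_apply]
    have h2 : ((ρ (t⁻¹ * (l : S) * t) : (V →ₗ[ℂ] V)ˣ) : V →ₗ[ℂ] V) v
        = ((cchi t l : ℂˣ) : ℂ) • v := hχ ⟨t⁻¹ * (l : S) * t, hconj' t l l.2⟩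
    rw [h2, map_smul]
  -- linear independence of the weight vectors
  have hind : ∀ cf : (S ⧸ L) → ℂ, ∑ q : S ⧸ L, cf q • w q = 0 → ∀ p, cf p = 0 := by
    intro cf hcf p
    set E : V →ₗ[ℂ] V := ∑ l : L, (((cchi (Quotient.out p) l)⁻¹ : ℂˣ) : ℂ) •
      ((ρ (l : S) : (V →ₗ[ℂ] V)ˣ) : V →ₗ[ℂ] V) with hEdef
    have hEw : ∀ q : S ⧸ L, E (w q) =
        (∑ l : L, (((cchi (Quotient.out p) l)⁻¹ : ℂˣ) : ℂ) * ((cchi (Quotient.out q) l : ℂˣ) : ℂ)) • w q := by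
      intro q
      rw [hEdef, LinearMap.sum_apply, Finset.sum_smul]
      congr 1
      ext l
      rw [LinearMap.smul_apply, hweight q l, smul_smul]
    have hEwq : ∀ q : S ⧸ L, E (w q) = (if p = q then ((Fintype.card L : ℂ)) else 0) • w q := by
      intro q
      rw [hEw q]
      congr 1
      by_cases hpq : p = q
      · subst hpq
        rw [if_pos rfl]
        have : ∀ l : L, (((cchi (Quotient.out p) l)⁻¹ : ℂˣ) : ℂ) * ((cchi (Quotient.out p) l : ℂˣ) : ℂ) = 1 := by
          intro l
          rw [← Units.val_mul]
          simp
        simp [this]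
      · rw [if_neg hpq]
        set ψ : L →* ℂˣ := (cchi (Quotient.out q)) * (cchi (Quotient.out p))⁻¹ with hψdef
        have hne : cchi (Quotient.out p) ≠ cchi (Quotient.out q) := fun h => hpq (hdist p q h)
        have : ∃ l₀ : L, cchi (Quotient.out p) l₀ ≠ cchi (Quotient.out q) l₀ := by
          by_contra hno
          push_neg at hno
          exact hne (MonoidHom.ext hno)
        obtain ⟨l₀, hl₀⟩ := this
        have hψne : ψ l₀ ≠ 1 := by
          intro h
          have h' : cchi (Quotient.out q) l₀ * (cchi (Quotient.out p) l₀)⁻¹ = 1 := h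
          exact hl₀ (mul_inv_eq_one.mp h').symm
        have hsum := sum_char_eq_zero ψ l₀ hψne
        rw [← hsum]
        congr 1
        ext l
        rw [hψdef]
        simp only [MonoidHom.mul_apply, MonoidHom.inv_apply, Units.val_mul,
          Units.val_inv_eq_inv_val]
        ring
    have h0 : E (∑ q : S ⧸ L, cf q • w q) = (cf p * (Fintype.card L : ℂ)) • w p := by
      rw [map_sum]
      have : ∀ q : S ⧸ L, E (cf q • w q) = cf q • (if p = q then ((Fintype.card L : ℂ)) else 0) • w q := by
        intro q; rw [map_smul, hEwq q]
      rw [Finset.sum_congr rfl (fun q _ => this q)]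
      rw [Finset.sum_eq_single p]
      · rw [if_pos rfl, smul_smul]
      · intro q _ hq
        rw [if_neg (fun h => hq h.symm), zero_smul, smul_zero]
      · intro h; exact absurd (Finset.mem_univ p) h
    rw [hcf, map_zero] at h0
    have := (smul_eq_zero.mp h0.symm).resolve_right (hw0 p)
    rcases mul_eq_zero.mp this with h | h
    · exact h
    · exact absurd h (Nat.cast_ne_zero.mpr Fintype.card_ne_zero)
    -- the algebra map
  set ρ' : S →* (V →ₗ[ℂ] V) := (Units.coeHom (V →ₗ[ℂ] V)).comp ρ with hρ'def
  set Φ : MonoidAlgebra ℂ S →ₐ[ℂ] Module.End ℂ V := (MonoidAlgebra.lift ℂ (Module.End ℂ V) S) ρ' with hΦdef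
  have hΦof : ∀ s : S, Φ (MonoidAlgebra.of ℂ S s) = ((ρ s : (V →ₗ[ℂ] V)ˣ) : V →ₗ[ℂ] V) :=
    fun s => MonoidAlgebra.lift_of ρ' s
  -- module structure on V via Φ
  letI : SMul (MonoidAlgebra ℂ S) V := ⟨fun a x => Φ a x⟩
  have hsmul_def : ∀ (a : MonoidAlgebra ℂ S) (x : V), a • x = Φ a x := fun a x => rfl
  letI : MulAction (MonoidAlgebra ℂ S) V :=
    { one_smul := fun x => by rw [hsmul_def, map_one]; rfl
      mul_smul := fun a b x => by rw [hsmul_def, map_mul]; rfl }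
  letI : DistribMulAction (MonoidAlgebra ℂ S) V :=
    { smul_zero := fun a => (Φ a).map_zero
      smul_add := fun a x y => (Φ a).map_add x y }
  letI : Module (MonoidAlgebra ℂ S) V :=
    { add_smul := fun a b x => by rw [hsmul_def, map_add]; rfl
      zero_smul := fun x => by rw [hsmul_def, map_zero]; rfl }
  -- the evaluation map
  set ψlin : MonoidAlgebra ℂ S →ₗ[MonoidAlgebra ℂ S] V :=
    { toFun := fun x => Φ x v
      map_add' := fun a b => by show Φ (a + b) v = Φ a v + Φ b v; rw [map_add]; rfl
      map_smul' := fun a x => by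
        show Φ (a • x) v = a • (Φ x v)
        rw [smul_eq_mul, map_mul, hsmul_def]
        rfl } with hψdef2
  have hψapp : ∀ x : MonoidAlgebra ℂ S, ψlin x = Φ x v := fun x => rfl
  -- the ideal is in the kernel
  have hker : indIdeal L χ ≤ LinearMap.ker ψlin := by
    rw [indIdeal, Submodule.span_le]
    rintro x ⟨l, rfl⟩
    rw [SetLike.mem_coe, LinearMap.mem_ker, hψapp, map_sub, hΦof]
    have h1 : ((χ l : ℂˣ) : ℂ) • (1 : MonoidAlgebra ℂ S)
        = algebraMap ℂ (MonoidAlgebra ℂ S) ((χ l : ℂˣ) : ℂ) := by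
      rw [Algebra.algebraMap_eq_smul_one]
    rw [h1, AlgHom.commutes]
    rw [LinearMap.sub_apply, Module.algebraMap_end_apply, hχ l, sub_self]
  set T0 : (MonoidAlgebra ℂ S ⧸ indIdeal L χ) →ₗ[MonoidAlgebra ℂ S] V :=
    (indIdeal L χ).liftQ ψlin hker with hT0def
  have hT0mk : ∀ x : MonoidAlgebra ℂ S, T0 (Submodule.Quotient.mk x) = Φ x v :=
    fun x => rfl
  -- surjectivity
  have hsurj : Function.Surjective T0 := by
    set Wr : Submodule ℂ V :=
      { carrier := Set.range (fun x : MonoidAlgebra ℂ S => Φ x v)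
        add_mem' := by
          rintro _ _ ⟨a, rfl⟩ ⟨b, rfl⟩
          exact ⟨a + b, by show Φ (a + b) v = Φ a v + Φ b v; rw [map_add]; rfl⟩
        zero_mem' := ⟨0, by show Φ 0 v = 0; rw [map_zero]; rfl⟩
        smul_mem' := by
          rintro r _ ⟨a, rfl⟩
          exact ⟨r • a, by show Φ (r • a) v = r • Φ a v; rw [map_smul]; rfl⟩ } with hWrdef
    have hWrinv : ∀ (s : S) (x : V), x ∈ Wr → ((ρ s : (V →ₗ[ℂ] V)ˣ) : V →ₗ[ℂ] V) x ∈ Wr := by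
      rintro s _ ⟨a, rfl⟩
      refine ⟨MonoidAlgebra.of ℂ S s * a, ?_⟩
      show Φ (MonoidAlgebra.of ℂ S s * a) v = _
      rw [map_mul, hΦof]
      rfl
    have hWrne : Wr ≠ ⊥ := by
      intro hb
      have hv : v ∈ Wr := ⟨1, by show Φ 1 v = v; rw [map_one]; rfl⟩
      rw [hb, Submodule.mem_bot] at hv
      exact hv0 hv
    have hWrtop : Wr = ⊤ := (hirr Wr hWrinv).resolve_left hWrne
    intro x
    have : x ∈ Wr := hWrtop ▸ Submodule.mem_top
    obtain ⟨a, ha⟩ := this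
    exact ⟨Submodule.Quotient.mk a, ha⟩
  -- injectivity
  have hker2 : ∀ x : MonoidAlgebra ℂ S, Φ x v = 0 → x ∈ indIdeal L χ := by
    intro x hx
    set R : Submodule ℂ (MonoidAlgebra ℂ S) :=
      Submodule.span ℂ (Set.range fun q : S ⧸ L => MonoidAlgebra.of ℂ S (Quotient.out q)) with hRdef
    set K : Submodule ℂ (MonoidAlgebra ℂ S) := (indIdeal L χ).restrictScalars ℂ ⊔ R with hKdef
    have htop : ∀ y : MonoidAlgebra ℂ S, y ∈ K := by
      intro y
      induction y using MonoidAlgebra.induction_on with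
      | of s =>
        set q : S ⧸ L := QuotientGroup.mk s with hqdef
        set t : S := Quotient.out q with htdef
        have hl : t⁻¹ * s ∈ L := by
          have := QuotientGroup.out_eq' q
          rw [hqdef] at this
          exact QuotientGroup.eq.mp this
        set l : L := ⟨t⁻¹ * s, hl⟩ with hldef
        have hdecomp : MonoidAlgebra.of ℂ S s
            = MonoidAlgebra.of ℂ S t *
                (MonoidAlgebra.of ℂ S (l : S) - ((χ l : ℂˣ) : ℂ) • (1 : MonoidAlgebra ℂ S))
              + ((χ l : ℂˣ) : ℂ) • MonoidAlgebra.of ℂ S t := by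
          rw [mul_sub, ← map_mul, mul_smul_comm, mul_one]
          have : t * (l : S) = s := by rw [hldef]; show t * (t⁻¹ * s) = s; group
          rw [this]
          abel
        rw [hdecomp]
        apply K.add_mem
        · apply Submodule.mem_sup_left
          show MonoidAlgebra.of ℂ S t * _ ∈ indIdeal L χ
          have hgen : (MonoidAlgebra.of ℂ S (l : S) - ((χ l : ℂˣ) : ℂ) • (1 : MonoidAlgebra ℂ S))
              ∈ indIdeal L χ := Submodule.subset_span ⟨l, rfl⟩
          have := (indIdeal L χ).smul_mem (MonoidAlgebra.of ℂ S t) hgen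
          rwa [smul_eq_mul] at this
        · apply Submodule.mem_sup_right
          exact R.smul_mem _ (Submodule.subset_span ⟨q, rfl⟩)
      | add a b ha hb => exact K.add_mem ha hb
      | smul r a ha => exact K.smul_mem r ha
    obtain ⟨y, hy, r, hr, hyr⟩ := Submodule.mem_sup.mp (htop x)
    have hyI : y ∈ indIdeal L χ := hy
    have hΦy : Φ y v = 0 := by
      have := hker hyI
      rw [LinearMap.mem_ker] at this
      exact this
    have hΦr : Φ r v = 0 := by
      have h2 : Φ (y + r) = Φ y + Φ r := map_add Φ y r
      have : Φ x v = Φ y v + Φ r v := by rw [← hyr, h2]; rfl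
      rw [hx, hΦy, zero_add] at this
      exact this.symm
    obtain ⟨cf, hcf⟩ := (Submodule.mem_span_range_iff_exists_fun ℂ).mp hr
    have hsum : ∑ q : S ⧸ L, cf q • w q = 0 := by
      have h1 : Φ r v = ∑ q : S ⧸ L, cf q • w q := by
        rw [← hcf, map_sum]
        rw [LinearMap.sum_apply]
        congr 1
        ext q
        rw [map_smul, LinearMap.smul_apply, hΦof]
      rw [← h1, hΦr]
    have hcf0 : ∀ q, cf q = 0 := hind cf hsum
    have hr0 : r = 0 := by
      rw [← hcf]
      simp [hcf0]
    rw [← hyr, hr0, add_zero]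
    exact hyI
  have hinj : Function.Injective T0 := by
    rw [← LinearMap.ker_eq_bot]
    rw [hT0def, Submodule.ker_liftQ_eq_bot]
    intro x hx
    rw [LinearMap.mem_ker, hψapp] at hx
    exact hker2 x hx
  set Teq := LinearEquiv.ofBijective T0 ⟨hinj, hsurj⟩ with hTeqdef
  refine ⟨χ, hext, Teq.toAddEquiv, ?_, ?_⟩
  · intro a x
    show T0 (algebraMap ℂ (MonoidAlgebra ℂ S) a • x) = a • T0 x
    rw [map_smul, hsmul_def, AlgHom.commutes, Module.algebraMap_end_apply]
  · intro s x
    show T0 (MonoidAlgebra.of ℂ S s • x) = ((ρ s : (V →ₗ[ℂ] V)ˣ) : V →ₗ[ℂ] V) (T0 x)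
    rw [map_smul, hsmul_def, hΦof]
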